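/- Let n ≥ 1 and let q_0, q_1, …, q_n be positive integers forming a well-formed weight, meaning that for every index j the greatest common divisor of the set {q_i : i ≠ j} equals 1. In ℚ^n, let v_1, …, v_n be the standard basis vectors, let v_0 = −(v_1 + … + v_n), and set e_i = (1/q_i)·v_i for i = 0, …, n. Suppose k_0, k_1, …, k_n are positive integers with k_0·e_0 + k_1·e_1 + … + k_n·e_n = 0. Then there exists a positive integer m such that k_i = m·q_i for every i = 0, …, n; equivalently, k_i·e_i = m·v_i for every i. -/

import Mathlib

/-- Rigidity statement at the heart of Theorem 5.2: for a well-formed weight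
`(q 0, …, q n)`, with `v (j+1)` the standard basis of `ℚ^n`, `v 0 = -(v 1 + ⋯ + v n)`
and `e i = v i / q i`, any positive integral balanced collection
`∑ k i • e i = 0` satisfies `k i = m * q i` for a single positive integer `m`. -/
theorem stmt8 (n : ℕ) (hn : 1 ≤ n) (q : Fin (n + 1) → ℕ) (hq : ∀ i, 0 < q i)
    (hwf : ∀ j : Fin (n + 1), (Finset.univ.erase j).gcd q = 1)
    (v : Fin (n + 1) → (Fin n → ℚ))
    (hv : ∀ j : Fin n, v j.succ = Pi.single j 1)
    (hv0 : v 0 = -∑ j : Fin n, Pi.single j 1)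
    (e : Fin (n + 1) → (Fin n → ℚ)) (he : ∀ i, e i = (q i : ℚ)⁻¹ • v i)
    (k : Fin (n + 1) → ℕ) (hk : ∀ i, 0 < k i)
    (hbal : ∑ i, (k i : ℚ) • e i = 0) :
    ∃ m : ℕ, 0 < m ∧ ∀ i, k i = m * q i := by
  have hq0 : (q 0 : ℚ) ≠ 0 := Nat.cast_ne_zero.mpr (hq 0).ne'
  have key : ∀ j : Fin n, (k j.succ : ℚ) * q 0 = (k 0 : ℚ) * q j.succ := by
    intro j
    have h := congrFun hbal j
    simp only [Finset.sum_apply, Pi.smul_apply, he, Pi.zero_apply, hv, hv0,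
      Fin.sum_univ_succ, smul_eq_mul, Pi.neg_apply, Pi.single_apply,
      Finset.sum_ite_eq', Finset.sum_ite_eq, Finset.mem_univ, if_true, mul_ite, mul_one, mul_zero,
      mul_neg] at h
    have hqj : (q j.succ : ℚ) ≠ 0 := Nat.cast_ne_zero.mpr (hq j.succ).ne'
    field_simp at h
    linarith [h]
  have keyN : ∀ i, k i * q 0 = k 0 * q i := by
    intro i
    induction i using Fin.cases with
    | zero => ring
    | succ j => exact_mod_cast key j
  set d := Nat.gcd (k 0) (q 0) with hd
  have hdpos : 0 < d := Nat.gcd_pos_of_pos_right _ (hq 0)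
  set a := k 0 / d with ha
  set b := q 0 / d with hb
  have hk0 : k 0 = a * d := (Nat.div_mul_cancel (Nat.gcd_dvd_left _ _)).symm
  have hq0' : q 0 = b * d := (Nat.div_mul_cancel (Nat.gcd_dvd_right _ _)).symm
  have hcop : Nat.Coprime a b := Nat.coprime_div_gcd_div_gcd hdpos
  have hib : ∀ i, k i * b = a * q i := by
    intro i
    have h := keyN i
    rw [hk0, hq0'] at h
    have : k i * b * d = a * q i * d := by ring_nf; ring_nf at h; linarith
    exact Nat.eq_of_mul_eq_mul_right hdpos this
  have hbdvd : ∀ i, b ∣ q i := by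
    intro i
    have : b ∣ q i * a := ⟨k i, by have := hib i; linarith⟩
    exact (hcop.symm.dvd_of_dvd_mul_right) this
  have hb1 : b = 1 := by
    have : b ∣ (Finset.univ.erase (0 : Fin (n+1))).gcd q :=
      Finset.dvd_gcd fun i _ => hbdvd i
    rw [hwf 0] at this
    exact Nat.dvd_one.mp this
  refine ⟨a, ?_, fun i => ?_⟩
  · rcases Nat.eq_zero_or_pos a with h | h
    · exfalso; have := hk 0; rw [hk0, h] at this; simp at this
    · exact h
  · have := hib i
    rw [hb1, mul_one] at this
    exact this
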